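/- If θ = u + i v with u, v real and |v| ≤ π/3, then |arg(cosh(θ))| ≤ β₂ · |u| · |v|, where β₂ = 3√3/π. -/

import Mathlib

open Real

lemma my_arctan_le_self {x : ℝ} (hx : 0 ≤ x) : Real.arctan x ≤ x := by
  rcases lt_or_ge x (π / 2) with h | h
  · calc Real.arctan x ≤ Real.arctan (Real.tan x) :=
          Real.arctan_strictMono.monotone (Real.le_tan hx h)
      _ = x := Real.arctan_tan (by linarith [Real.pi_pos]) h
  · exact le_trans (Real.arctan_lt_pi_div_two x).le h

lemma my_sinh_le_mul_cosh {x : ℝ} (hx : 0 ≤ x) : Real.sinh x ≤ x * Real.cosh x := by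
  have mono : MonotoneOn (fun y : ℝ => y * Real.cosh y - Real.sinh y) (Set.Ici 0) := by
    apply monotoneOn_of_deriv_nonneg (convex_Ici 0)
    · fun_prop
    · apply Differentiable.differentiableOn; fun_prop
    · intro y hy
      rw [interior_Ici] at hy
      have hy0 : (0:ℝ) < y := hy
      have h1 : HasDerivAt (fun y : ℝ => y * Real.cosh y - Real.sinh y)
          (1 * Real.cosh y + y * Real.sinh y - Real.cosh y) y :=
        ((hasDerivAt_id y).mul (Real.hasDerivAt_cosh y)).sub (Real.hasDerivAt_sinh y)
      rw [h1.deriv]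
      have : 0 ≤ y * Real.sinh y :=
        mul_nonneg hy0.le (Real.sinh_nonneg_iff.2 hy0.le)
      nlinarith
  have := mono (Set.self_mem_Ici) (by exact hx) hx
  simpa using this

lemma my_convexOn_tan : ConvexOn ℝ (Set.Icc 0 (π / 3)) Real.tan := by
  have hsub : ∀ x ∈ Set.Icc (0:ℝ) (π/3), 0 < Real.cos x := by
    intro x hx
    apply Real.cos_pos_of_mem_Ioo
    constructor <;> nlinarith [Real.pi_pos, hx.1, hx.2]
  apply convexOn_of_deriv2_nonneg (convex_Icc 0 (π/3))
  · exact Real.continuousOn_tan.mono fun x hx => (hsub x hx).ne'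
  · rw [interior_Icc]
    intro x hx
    exact (Real.hasDerivAt_tan (hsub x (Set.mem_Icc_of_Ioo hx)).ne').differentiableAt.differentiableWithinAt
  · rw [interior_Icc]
    intro x hx
    have hc := (hsub x (Set.mem_Icc_of_Ioo hx))
    have hd : deriv Real.tan = fun y => 1 / Real.cos y ^ 2 := funext Real.deriv_tan
    rw [hd]
    have : DifferentiableAt ℝ (fun y => 1 / Real.cos y ^ 2) x := by
      apply DifferentiableAt.div (differentiableAt_const 1)
      · fun_prop
      · positivity
    exact this.differentiableWithinAt
  · rw [interior_Icc]
    intro x hx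
    have hc := (hsub x (Set.mem_Icc_of_Ioo hx))
    have hs : 0 ≤ Real.sin x := Real.sin_nonneg_of_nonneg_of_le_pi hx.1.le
      (by nlinarith [Real.pi_pos, hx.2])
    have hd : deriv Real.tan = fun y => 1 / Real.cos y ^ 2 := funext Real.deriv_tan
    have h1 : HasDerivAt (fun y => Real.cos y ^ 2) (2 * Real.cos x ^ 1 * (-Real.sin x)) x := by
      simpa using (Real.hasDerivAt_cos x).fun_pow 2
    have h2 : HasDerivAt (fun y => 1 / Real.cos y ^ 2)
        ((0 * Real.cos x ^ 2 - 1 * (2 * Real.cos x ^ 1 * (-Real.sin x))) / (Real.cos x ^ 2) ^ 2) x :=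
      (hasDerivAt_const x 1).div h1 (by positivity)
    have : deriv^[2] Real.tan x = deriv (deriv Real.tan) x := rfl
    rw [this, hd, h2.deriv]
    have : (0 * Real.cos x ^ 2 - 1 * (2 * Real.cos x ^ 1 * (-Real.sin x))) / (Real.cos x ^ 2) ^ 2
        = 2 * Real.sin x * Real.cos x / (Real.cos x ^ 2) ^ 2 := by ring
    rw [this]
    positivity

lemma my_tan_le {v : ℝ} (h0 : 0 ≤ v) (h1 : v ≤ π / 3) :
    Real.tan v ≤ 3 * Real.sqrt 3 / π * v := by
  have hpi := Real.pi_pos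
  set t : ℝ := v / (π / 3) with ht
  have ht0 : 0 ≤ t := by positivity
  have ht1 : t ≤ 1 := by rw [ht, div_le_one (by positivity)]; exact h1
  have key := my_convexOn_tan.2 (Set.left_mem_Icc.2 (by positivity))
    (Set.right_mem_Icc.2 (by positivity)) (by linarith : (0:ℝ) ≤ 1 - t) ht0 (by ring)
  have hv : (1 - t) • (0:ℝ) + t • (π / 3) = v := by
    rw [smul_zero, zero_add, smul_eq_mul, ht, div_mul_cancel₀ _ (by positivity)]
  rw [hv] at key
  calc Real.tan v ≤ (1 - t) • Real.tan 0 + t • Real.tan (π / 3) := key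
    _ = t * Real.sqrt 3 := by rw [Real.tan_zero, Real.tan_pi_div_three]; simp [smul_eq_mul]
    _ = 3 * Real.sqrt 3 / π * v := by rw [ht]; field_simp

theorem abs_arg_cosh_le (θ : ℂ) (hv : |θ.im| ≤ π / 3) :
    |Complex.arg (Complex.cosh θ)| ≤ (3 * Real.sqrt 3 / π) * |θ.re| * |θ.im| := by
  have hpi := Real.pi_pos
  set u := θ.re with hu
  set v := θ.im with hvdef
  have hvlt : |v| < π / 2 := lt_of_le_of_lt hv (by linarith)
  have hcos : 0 < Real.cos v := by
    apply Real.cos_pos_of_mem_Ioo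
    rw [abs_lt] at hvlt
    exact ⟨hvlt.1, hvlt.2⟩
  have hθ : Complex.cosh θ = ((Real.cosh u * Real.cos v : ℝ) : ℂ)
      + ((Real.sinh u * Real.sin v : ℝ) : ℂ) * Complex.I := by
    have hθ' : θ = (u : ℂ) + (v : ℂ) * Complex.I := (Complex.re_add_im θ).symm
    rw [hθ', Complex.cosh_add, Complex.cosh_mul_I, Complex.sinh_mul_I,
      ← Complex.ofReal_cosh, ← Complex.ofReal_sinh, ← Complex.ofReal_cos, ← Complex.ofReal_sin]
    push_cast
    ring
  have hre : (Complex.cosh θ).re = Real.cosh u * Real.cos v := by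
    rw [hθ]
    simp only [Complex.add_re, Complex.ofReal_re, Complex.mul_re, Complex.I_re,
      Complex.ofReal_im, Complex.I_im]
    ring
  have him : (Complex.cosh θ).im = Real.sinh u * Real.sin v := by
    rw [hθ]
    simp only [Complex.add_im, Complex.ofReal_im, Complex.mul_im, Complex.I_im,
      Complex.ofReal_re, Complex.I_re]
    ring
  have hrepos : 0 < (Complex.cosh θ).re := by
    rw [hre]; exact mul_pos (Real.cosh_pos u) hcos
  -- arg = arctan(im/re)
  have harg : Complex.arg (Complex.cosh θ) =
      Real.arctan ((Complex.cosh θ).im / (Complex.cosh θ).re) := by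
    have h2 : |Complex.arg (Complex.cosh θ)| < π / 2 :=
      Complex.abs_arg_lt_pi_div_two_iff.2 (Or.inl hrepos)
    rw [abs_lt] at h2
    rw [← Complex.tan_arg, Real.arctan_tan h2.1 h2.2]
  rw [harg]
  have arctan_abs : ∀ x : ℝ, |Real.arctan x| = Real.arctan |x| := by
    intro x
    rcases abs_cases x with ⟨h, hn⟩ | ⟨h, hn⟩
    · rw [h, abs_of_nonneg]
      rw [← Real.arctan_zero]
      exact Real.arctan_strictMono.monotone hn
    · rw [h, Real.arctan_neg, abs_of_nonpos]
      rw [← Real.arctan_zero]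
      exact Real.arctan_strictMono.monotone hn.le
  have habs : |Real.arctan ((Complex.cosh θ).im / (Complex.cosh θ).re)|
      = Real.arctan (|(Complex.cosh θ).im| / (Complex.cosh θ).re) := by
    rw [arctan_abs, abs_div, abs_of_pos hrepos]
  rw [habs]
  -- bound the argument of arctan
  have hsinabs : |Real.sin v| = Real.sin |v| := by
    rcases abs_cases v with ⟨h, hn⟩ | ⟨h, hn⟩
    · rw [h]
      exact abs_of_nonneg (Real.sin_nonneg_of_nonneg_of_le_pi hn (by
        rw [← h] at hv ⊢; linarith))
    · rw [h, Real.sin_neg]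
      rw [abs_of_nonpos (Real.sin_nonpos_of_nonpos_of_neg_pi_le hn.le (by
        rw [abs_lt] at hvlt; linarith))]
  have hX : |(Complex.cosh θ).im| / (Complex.cosh θ).re
      = Real.sinh |u| * Real.sin |v| / (Real.cosh |u| * Real.cos |v|) := by
    rw [him, hre, abs_mul, Real.abs_sinh, hsinabs, ← Real.cosh_abs,
      ← Real.cos_abs]
  rw [hX]
  have hsv : 0 ≤ Real.sin |v| := by
    apply Real.sin_nonneg_of_nonneg_of_le_pi (abs_nonneg v) (by linarith [hv])
  have hcv : 0 < Real.cos |v| := by rwa [Real.cos_abs]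
  have hshu : 0 ≤ Real.sinh |u| := Real.sinh_nonneg_iff.2 (abs_nonneg u)
  have hXpos : 0 ≤ Real.sinh |u| * Real.sin |v| / (Real.cosh |u| * Real.cos |v|) := by
    positivity
  calc Real.arctan (Real.sinh |u| * Real.sin |v| / (Real.cosh |u| * Real.cos |v|))
      ≤ Real.sinh |u| * Real.sin |v| / (Real.cosh |u| * Real.cos |v|) :=
        my_arctan_le_self hXpos
    _ = (Real.sinh |u| / Real.cosh |u|) * Real.tan |v| := by
        rw [Real.tan_eq_sin_div_cos]; ring
    _ ≤ |u| * Real.tan |v| := by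
        apply mul_le_mul_of_nonneg_right _ (Real.tan_nonneg_of_nonneg_of_le_pi_div_two (abs_nonneg v) (by linarith))
        rw [div_le_iff₀ (Real.cosh_pos _)]
        exact my_sinh_le_mul_cosh (abs_nonneg u)
    _ ≤ |u| * (3 * Real.sqrt 3 / π * |v|) := by
        apply mul_le_mul_of_nonneg_left (my_tan_le (abs_nonneg v) hv) (abs_nonneg u)
    _ = 3 * Real.sqrt 3 / π * |u| * |v| := by ring
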